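/- Let (a,b) be a Golay complementary pair of length N, let (c,d) be its standard Golay complementary mate (c_k = conj(b_{N−1−k}), d_k = −conj(a_{N−1−k})), let x1,x2,x3,x4 ∈ {+1,−1} with x1·x2 + x3·x4 = 0, and define the length-4N sequences p = x1·a ∥ x2·b ∥ x3·a ∥ x4·b and q = x1·c ∥ x2·d ∥ x3·c ∥ x4·d. Then (p,q) is a (2, 4N, N)-Golay-ZCZ sequence pair; that is: (C1) C_p(τ) + C_q(τ) = 0 for all 1 ≤ τ ≤ 4N−1; (C2) R_p(τ) = 0 and R_q(τ) = 0 for all 1 ≤ τ ≤ N; (C3) R_{p,q}(τ) = 0 for all 0 ≤ τ ≤ N. -/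

import Mathlib

open Finset

/-- Aperiodic cross-correlation of length-`L` complex sequences at shift `0 ≤ τ`. -/
noncomputable def aCorr (a b : ℕ → ℂ) (L τ : ℕ) : ℂ :=
  ∑ k ∈ Finset.range (L - τ), a k * (starRingEnd ℂ) (b (k + τ))

/-- Periodic cross-correlation of length-`L` complex sequences at shift `τ`. -/
noncomputable def pCorr (a b : ℕ → ℂ) (L τ : ℕ) : ℂ :=
  ∑ k ∈ Finset.range L, a k * (starRingEnd ℂ) (b ((k + τ) % L))

/-- The length-`4N` sequence `x1·a ∥ x2·b ∥ x3·a ∥ x4·b`. -/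
noncomputable def quadConcat (N : ℕ) (x1 x2 x3 x4 : ℂ) (a b : ℕ → ℂ) : ℕ → ℂ :=
  fun n =>
    if n < N then x1 * a n
    else if n < 2 * N then x2 * b (n - N)
    else if n < 3 * N then x3 * a (n - 2 * N)
    else x4 * b (n - 3 * N)

set_option linter.unusedTactic false

noncomputable def tCorr (u v : ℕ → ℂ) (N r : ℕ) : ℂ :=
  ∑ t ∈ Finset.range r, u (N - r + t) * (starRingEnd ℂ) (v t)

lemma tCorr_zero (u v : ℕ → ℂ) (N : ℕ) : tCorr u v N 0 = 0 := by
  simp [tCorr]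

lemma tCorr_eq_conj (u v : ℕ → ℂ) (N r : ℕ) (h : r ≤ N) :
    tCorr u v N r = (starRingEnd ℂ) (aCorr v u N (N - r)) := by
  rw [tCorr, aCorr, map_sum, show N - (N - r) = r from by omega]
  refine Finset.sum_congr rfl fun k hk => ?_
  rw [map_mul, Complex.conj_conj, show k + (N - r) = N - r + k from by omega]
  ring

lemma conj_aCorr_zero (u v : ℕ → ℂ) (N : ℕ) :
    (starRingEnd ℂ) (aCorr u v N 0) = aCorr v u N 0 := by
  rw [aCorr, aCorr, map_sum]
  refine Finset.sum_congr rfl fun k hk => ?_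
  rw [map_mul, Complex.conj_conj]
  ring

lemma quadConcat_eval₁ {N : ℕ} {x1 x2 x3 x4 : ℂ} {a b : ℕ → ℂ} {n : ℕ} (h : n < N) :
    quadConcat N x1 x2 x3 x4 a b n = x1 * a n := by
  simp only [quadConcat]; rw [if_pos h]
lemma quadConcat_eval₂ {N : ℕ} {x1 x2 x3 x4 : ℂ} {a b : ℕ → ℂ} {n : ℕ} (h1 : N ≤ n) (h2 : n < 2*N) :
    quadConcat N x1 x2 x3 x4 a b n = x2 * b (n - N) := by
  simp only [quadConcat]; rw [if_neg (by (try simp only []); omega), if_pos h2]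
lemma quadConcat_eval₃ {N : ℕ} {x1 x2 x3 x4 : ℂ} {a b : ℕ → ℂ} {n : ℕ} (h1 : 2*N ≤ n) (h2 : n < 3*N) :
    quadConcat N x1 x2 x3 x4 a b n = x3 * a (n - 2*N) := by
  simp only [quadConcat]; rw [if_neg (by (try simp only []); omega), if_neg (by (try simp only []); omega), if_pos h2]
lemma quadConcat_eval₄ {N : ℕ} {x1 x2 x3 x4 : ℂ} {a b : ℕ → ℂ} {n : ℕ} (h1 : 3*N ≤ n) :
    quadConcat N x1 x2 x3 x4 a b n = x4 * b (n - 3*N) := by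
  simp only [quadConcat]; rw [if_neg (by (try simp only []); omega), if_neg (by (try simp only []); omega), if_neg (by (try simp only []); omega)]

lemma mul_seq_congr (x : ℂ) (u : ℕ → ℂ) {i j : ℕ} (h : i = j) : x * u i = x * u j := by rw [h]

lemma chunk_to_aCorr (P Q : ℕ → ℂ) (g : ℕ → ℕ) (τ N r : ℕ) (x y : ℂ) (u v : ℕ → ℂ)
    (hP : ∀ i, i < N - r → P (g i) = x * u i)
    (hQ : ∀ i, i < N - r → Q (g i + τ) = y * v (i + r)) :
    ∑ i ∈ Finset.range (N - r), P (g i) * (starRingEnd ℂ) (Q (g i + τ))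
      = x * (starRingEnd ℂ) y * aCorr u v N r := by
  rw [aCorr, Finset.mul_sum]
  refine Finset.sum_congr rfl fun i hi => ?_
  rw [hP i (mem_range.1 hi), hQ i (mem_range.1 hi), map_mul]; ring
lemma chunk_to_tCorr (P Q : ℕ → ℂ) (g : ℕ → ℕ) (τ N r : ℕ) (x y : ℂ) (u v : ℕ → ℂ)
    (hP : ∀ i, i < r → P (g i) = x * u (N - r + i))
    (hQ : ∀ i, i < r → Q (g i + τ) = y * v i) :
    ∑ i ∈ Finset.range r, P (g i) * (starRingEnd ℂ) (Q (g i + τ))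
      = x * (starRingEnd ℂ) y * tCorr u v N r := by
  rw [tCorr, Finset.mul_sum]
  refine Finset.sum_congr rfl fun i hi => ?_
  rw [hP i (mem_range.1 hi), hQ i (mem_range.1 hi), map_mul]; ring

lemma D3 (N : ℕ) (x1 x2 x3 x4 y1 y2 y3 y4 : ℂ) (a b e f : ℕ → ℂ) (τ r : ℕ)
    (hr : r < N) (hτ : τ = 3*N + r) :
    aCorr (quadConcat N x1 x2 x3 x4 a b) (quadConcat N y1 y2 y3 y4 e f) (4*N) τ
      = x1 * (starRingEnd ℂ) y4 * aCorr a f N r := by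
  rw [hτ]
  rw [aCorr, show 4*N - (3*N + r) = N - r from by omega]
  rw [chunk_to_aCorr _ _ (fun i => i) (3*N + r) N r x1 y4 a f
    (fun i hi => quadConcat_eval₁ (by (try simp only []); omega))
    (fun i hi => by rw [quadConcat_eval₄ (by (try simp only []); omega)]; exact mul_seq_congr _ _ (by (try simp only []); omega))]

lemma D2 (N : ℕ) (x1 x2 x3 x4 y1 y2 y3 y4 : ℂ) (a b e f : ℕ → ℂ) (τ r : ℕ)
    (hr : r < N) (hτ : τ = 2*N + r) :
    aCorr (quadConcat N x1 x2 x3 x4 a b) (quadConcat N y1 y2 y3 y4 e f) (4*N) τ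
      = x1 * (starRingEnd ℂ) y3 * aCorr a e N r + x2 * (starRingEnd ℂ) y4 * aCorr b f N r
        + x1 * (starRingEnd ℂ) y4 * tCorr a f N r := by
  rw [hτ]
  rw [aCorr, show 4*N - (2*N + r) = (N-r) + (r + (N-r)) from by omega,
    Finset.sum_range_add, Finset.sum_range_add]
  rw [chunk_to_aCorr _ _ (fun i => i) (2*N + r) N r x1 y3 a e
    (fun i hi => quadConcat_eval₁ (by (try simp only []); omega))
    (fun i hi => by rw [quadConcat_eval₃ (by (try simp only []); omega) (by (try simp only []); omega)]; exact mul_seq_congr _ _ (by (try simp only []); omega))]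
  rw [chunk_to_tCorr _ _ (fun i => N - r + i) (2*N + r) N r x1 y4 a f
    (fun i hi => quadConcat_eval₁ (by (try simp only []); omega))
    (fun i hi => by rw [quadConcat_eval₄ (by (try simp only []); omega)]; exact mul_seq_congr _ _ (by (try simp only []); omega))]
  rw [chunk_to_aCorr _ _ (fun i => N - r + (r + i)) (2*N + r) N r x2 y4 b f
    (fun i hi => by rw [quadConcat_eval₂ (by (try simp only []); omega) (by (try simp only []); omega)]; exact mul_seq_congr _ _ (by (try simp only []); omega))
    (fun i hi => by rw [quadConcat_eval₄ (by (try simp only []); omega)]; exact mul_seq_congr _ _ (by (try simp only []); omega))]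
  ring

lemma D1 (N : ℕ) (x1 x2 x3 x4 y1 y2 y3 y4 : ℂ) (a b e f : ℕ → ℂ) (τ r : ℕ)
    (hr : r < N) (hτ : τ = N + r) :
    aCorr (quadConcat N x1 x2 x3 x4 a b) (quadConcat N y1 y2 y3 y4 e f) (4*N) τ
      = (x1 * (starRingEnd ℂ) y2 + x3 * (starRingEnd ℂ) y4) * aCorr a f N r
        + x2 * (starRingEnd ℂ) y3 * aCorr b e N r
        + x1 * (starRingEnd ℂ) y3 * tCorr a e N r
        + x2 * (starRingEnd ℂ) y4 * tCorr b f N r := by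
  rw [hτ]
  rw [aCorr, show 4*N - (N + r) = (N-r) + (r + ((N-r) + (r + (N-r)))) from by omega,
    Finset.sum_range_add, Finset.sum_range_add, Finset.sum_range_add, Finset.sum_range_add]
  rw [chunk_to_aCorr _ _ (fun i => i) (N + r) N r x1 y2 a f
    (fun i hi => quadConcat_eval₁ (by (try simp only []); omega))
    (fun i hi => by rw [quadConcat_eval₂ (by (try simp only []); omega) (by (try simp only []); omega)]; exact mul_seq_congr _ _ (by (try simp only []); omega))]
  rw [chunk_to_tCorr _ _ (fun i => N - r + i) (N + r) N r x1 y3 a e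
    (fun i hi => quadConcat_eval₁ (by (try simp only []); omega))
    (fun i hi => by rw [quadConcat_eval₃ (by (try simp only []); omega) (by (try simp only []); omega)]; exact mul_seq_congr _ _ (by (try simp only []); omega))]
  rw [chunk_to_aCorr _ _ (fun i => N - r + (r + i)) (N + r) N r x2 y3 b e
    (fun i hi => by rw [quadConcat_eval₂ (by (try simp only []); omega) (by (try simp only []); omega)]; exact mul_seq_congr _ _ (by (try simp only []); omega))
    (fun i hi => by rw [quadConcat_eval₃ (by (try simp only []); omega) (by (try simp only []); omega)]; exact mul_seq_congr _ _ (by (try simp only []); omega))]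
  rw [chunk_to_tCorr _ _ (fun i => N - r + (r + (N - r + i))) (N + r) N r x2 y4 b f
    (fun i hi => by rw [quadConcat_eval₂ (by (try simp only []); omega) (by (try simp only []); omega)]; exact mul_seq_congr _ _ (by (try simp only []); omega))
    (fun i hi => by rw [quadConcat_eval₄ (by (try simp only []); omega)]; exact mul_seq_congr _ _ (by (try simp only []); omega))]
  rw [chunk_to_aCorr _ _ (fun i => N - r + (r + (N - r + (r + i)))) (N + r) N r x3 y4 a f
    (fun i hi => by rw [quadConcat_eval₃ (by (try simp only []); omega) (by (try simp only []); omega)]; exact mul_seq_congr _ _ (by (try simp only []); omega))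
    (fun i hi => by rw [quadConcat_eval₄ (by (try simp only []); omega)]; exact mul_seq_congr _ _ (by (try simp only []); omega))]
  ring

lemma D0 (N : ℕ) (x1 x2 x3 x4 y1 y2 y3 y4 : ℂ) (a b e f : ℕ → ℂ) (τ r : ℕ)
    (hr : r < N) (hτ : τ = r) :
    aCorr (quadConcat N x1 x2 x3 x4 a b) (quadConcat N y1 y2 y3 y4 e f) (4*N) τ
      = (x1 * (starRingEnd ℂ) y1 + x3 * (starRingEnd ℂ) y3) * aCorr a e N r
        + (x2 * (starRingEnd ℂ) y2 + x4 * (starRingEnd ℂ) y4) * aCorr b f N r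
        + (x1 * (starRingEnd ℂ) y2 + x3 * (starRingEnd ℂ) y4) * tCorr a f N r
        + x2 * (starRingEnd ℂ) y3 * tCorr b e N r := by
  rw [hτ]
  rw [aCorr, show 4*N - r = (N-r) + (r + ((N-r) + (r + ((N-r) + (r + (N-r)))))) from by omega,
    Finset.sum_range_add, Finset.sum_range_add, Finset.sum_range_add, Finset.sum_range_add,
    Finset.sum_range_add, Finset.sum_range_add]
  rw [chunk_to_aCorr _ _ (fun i => i) r N r x1 y1 a e
    (fun i hi => quadConcat_eval₁ (by (try simp only []); omega))
    (fun i hi => by rw [quadConcat_eval₁ (by (try simp only []); omega)])]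
  rw [chunk_to_tCorr _ _ (fun i => N - r + i) r N r x1 y2 a f
    (fun i hi => quadConcat_eval₁ (by (try simp only []); omega))
    (fun i hi => by rw [quadConcat_eval₂ (by (try simp only []); omega) (by (try simp only []); omega)]; exact mul_seq_congr _ _ (by (try simp only []); omega))]
  rw [chunk_to_aCorr _ _ (fun i => N - r + (r + i)) r N r x2 y2 b f
    (fun i hi => by rw [quadConcat_eval₂ (by (try simp only []); omega) (by (try simp only []); omega)]; exact mul_seq_congr _ _ (by (try simp only []); omega))
    (fun i hi => by rw [quadConcat_eval₂ (by (try simp only []); omega) (by (try simp only []); omega)]; exact mul_seq_congr _ _ (by (try simp only []); omega))]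
  rw [chunk_to_tCorr _ _ (fun i => N - r + (r + (N - r + i))) r N r x2 y3 b e
    (fun i hi => by rw [quadConcat_eval₂ (by (try simp only []); omega) (by (try simp only []); omega)]; exact mul_seq_congr _ _ (by (try simp only []); omega))
    (fun i hi => by rw [quadConcat_eval₃ (by (try simp only []); omega) (by (try simp only []); omega)]; exact mul_seq_congr _ _ (by (try simp only []); omega))]
  rw [chunk_to_aCorr _ _ (fun i => N - r + (r + (N - r + (r + i)))) r N r x3 y3 a e
    (fun i hi => by rw [quadConcat_eval₃ (by (try simp only []); omega) (by (try simp only []); omega)]; exact mul_seq_congr _ _ (by (try simp only []); omega))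
    (fun i hi => by rw [quadConcat_eval₃ (by (try simp only []); omega) (by (try simp only []); omega)]; exact mul_seq_congr _ _ (by (try simp only []); omega))]
  rw [chunk_to_tCorr _ _ (fun i => N - r + (r + (N - r + (r + (N - r + i))))) r N r x3 y4 a f
    (fun i hi => by rw [quadConcat_eval₃ (by (try simp only []); omega) (by (try simp only []); omega)]; exact mul_seq_congr _ _ (by (try simp only []); omega))
    (fun i hi => by rw [quadConcat_eval₄ (by (try simp only []); omega)]; exact mul_seq_congr _ _ (by (try simp only []); omega))]
  rw [chunk_to_aCorr _ _ (fun i => N - r + (r + (N - r + (r + (N - r + (r + i)))))) r N r x4 y4 b f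
    (fun i hi => by rw [quadConcat_eval₄ (by (try simp only []); omega)]; exact mul_seq_congr _ _ (by (try simp only []); omega))
    (fun i hi => by rw [quadConcat_eval₄ (by (try simp only []); omega)]; exact mul_seq_congr _ _ (by (try simp only []); omega))]
  ring

section Mate
variable {N r : ℕ} {a b c d : ℕ → ℂ}

def HC (N : ℕ) (b c : ℕ → ℂ) : Prop := ∀ k, c k = (starRingEnd ℂ) (b (N - 1 - k))
def HD (N : ℕ) (a d : ℕ → ℂ) : Prop := ∀ k, d k = -(starRingEnd ℂ) (a (N - 1 - k))

lemma mate_cc (hc : HC N b c) (hr : r < N) : aCorr c c N r = aCorr b b N r := by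
  rw [aCorr, aCorr, ← Finset.sum_range_reflect (fun j => b j * (starRingEnd ℂ) (b (j + r))) (N - r)]
  refine Finset.sum_congr rfl fun k hk => ?_
  rw [Finset.mem_range] at hk
  rw [hc k, hc (k + r), Complex.conj_conj,
    show N - 1 - (k + r) = N - r - 1 - k from by omega,
    show N - 1 - k = N - r - 1 - k + r from by omega]
  ring

lemma mate_dd (hd : HD N a d) (hr : r < N) : aCorr d d N r = aCorr a a N r := by
  rw [aCorr, aCorr, ← Finset.sum_range_reflect (fun j => a j * (starRingEnd ℂ) (a (j + r))) (N - r)]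
  refine Finset.sum_congr rfl fun k hk => ?_
  rw [Finset.mem_range] at hk
  rw [hd k, hd (k + r), map_neg, Complex.conj_conj,
    show N - 1 - (k + r) = N - r - 1 - k from by omega,
    show N - 1 - k = N - r - 1 - k + r from by omega]
  ring

lemma mate_cd (hc : HC N b c) (hd : HD N a d) (hr : r < N) : aCorr c d N r = -aCorr a b N r := by
  rw [eq_neg_iff_add_eq_zero, aCorr, aCorr,
    ← Finset.sum_range_reflect (fun j => a j * (starRingEnd ℂ) (b (j + r))) (N - r),
    ← Finset.sum_add_distrib]
  refine Finset.sum_eq_zero fun k hk => ?_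
  rw [Finset.mem_range] at hk
  rw [hc k, hd (k + r), map_neg, Complex.conj_conj,
    show N - 1 - (k + r) = N - r - 1 - k from by omega,
    show N - 1 - k = N - r - 1 - k + r from by omega]
  ring

lemma mate_dc (hc : HC N b c) (hd : HD N a d) (hr : r < N) : aCorr d c N r = -aCorr b a N r := by
  rw [eq_neg_iff_add_eq_zero, aCorr, aCorr,
    ← Finset.sum_range_reflect (fun j => b j * (starRingEnd ℂ) (a (j + r))) (N - r),
    ← Finset.sum_add_distrib]
  refine Finset.sum_eq_zero fun k hk => ?_
  rw [Finset.mem_range] at hk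
  rw [hd k, hc (k + r), Complex.conj_conj,
    show N - 1 - (k + r) = N - r - 1 - k from by omega,
    show N - 1 - k = N - r - 1 - k + r from by omega]
  ring

lemma mate_tcc (hc : HC N b c) (hr : r < N) : tCorr c c N r = tCorr b b N r := by
  rw [tCorr, tCorr, ← Finset.sum_range_reflect (fun t => b (N - r + t) * (starRingEnd ℂ) (b t)) r]
  refine Finset.sum_congr rfl fun k hk => ?_
  rw [Finset.mem_range] at hk
  rw [hc (N - r + k), hc k, Complex.conj_conj,
    show N - 1 - (N - r + k) = r - 1 - k from by omega,
    show N - 1 - k = N - r + (r - 1 - k) from by omega]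
  ring

lemma mate_tdd (hd : HD N a d) (hr : r < N) : tCorr d d N r = tCorr a a N r := by
  rw [tCorr, tCorr, ← Finset.sum_range_reflect (fun t => a (N - r + t) * (starRingEnd ℂ) (a t)) r]
  refine Finset.sum_congr rfl fun k hk => ?_
  rw [Finset.mem_range] at hk
  rw [hd (N - r + k), hd k, map_neg, Complex.conj_conj,
    show N - 1 - (N - r + k) = r - 1 - k from by omega,
    show N - 1 - k = N - r + (r - 1 - k) from by omega]
  ring

lemma mate_tcd (hc : HC N b c) (hd : HD N a d) (hr : r < N) : tCorr c d N r = -tCorr a b N r := by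
  rw [eq_neg_iff_add_eq_zero, tCorr, tCorr,
    ← Finset.sum_range_reflect (fun t => a (N - r + t) * (starRingEnd ℂ) (b t)) r,
    ← Finset.sum_add_distrib]
  refine Finset.sum_eq_zero fun k hk => ?_
  rw [Finset.mem_range] at hk
  rw [hc (N - r + k), hd k, map_neg, Complex.conj_conj,
    show N - 1 - (N - r + k) = r - 1 - k from by omega,
    show N - 1 - k = N - r + (r - 1 - k) from by omega]
  ring

lemma mate_tdc (hc : HC N b c) (hd : HD N a d) (hr : r < N) : tCorr d c N r = -tCorr b a N r := by
  rw [eq_neg_iff_add_eq_zero, tCorr, tCorr,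
    ← Finset.sum_range_reflect (fun t => b (N - r + t) * (starRingEnd ℂ) (a t)) r,
    ← Finset.sum_add_distrib]
  refine Finset.sum_eq_zero fun k hk => ?_
  rw [Finset.mem_range] at hk
  rw [hd (N - r + k), hc k, Complex.conj_conj,
    show N - 1 - (N - r + k) = r - 1 - k from by omega,
    show N - 1 - k = N - r + (r - 1 - k) from by omega]
  ring

lemma mate_ac_bd (hc : HC N b c) (hd : HD N a d) (hr : r < N) : aCorr a c N r + aCorr b d N r = 0 := by
  rw [aCorr, aCorr,
    ← Finset.sum_range_reflect (fun k => b k * (starRingEnd ℂ) (d (k + r))) (N - r),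
    ← Finset.sum_add_distrib]
  refine Finset.sum_eq_zero fun k hk => ?_
  rw [Finset.mem_range] at hk
  rw [hc (k + r), hd (N - r - 1 - k + r), map_neg, Complex.conj_conj, Complex.conj_conj,
    show N - 1 - (N - r - 1 - k + r) = k from by omega,
    show N - 1 - (k + r) = N - r - 1 - k from by omega]
  ring

end Mate

lemma pCorr_split (u v : ℕ → ℂ) (L τ : ℕ) (h : τ ≤ L) :
    pCorr u v L τ = aCorr u v L τ + (starRingEnd ℂ) (aCorr v u L (L - τ)) := by
  rw [pCorr, ← tCorr_eq_conj u v L τ h]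
  have hsplit : ∑ k ∈ Finset.range L, u k * (starRingEnd ℂ) (v ((k + τ) % L))
      = ∑ k ∈ Finset.range ((L - τ) + τ), u k * (starRingEnd ℂ) (v ((k + τ) % L)) := by
    rw [Nat.sub_add_cancel h]
  rw [hsplit, Finset.sum_range_add]
  congr 1
  · rw [aCorr]
    refine Finset.sum_congr rfl fun k hk => ?_
    rw [Finset.mem_range] at hk
    rw [Nat.mod_eq_of_lt (by omega)]
  · rw [tCorr]
    refine Finset.sum_congr rfl fun k hk => ?_
    rw [Finset.mem_range] at hk
    rw [show L - τ + k + τ = L + k from by omega, Nat.add_mod_left, Nat.mod_eq_of_lt (by omega)]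

lemma pm_mul_self {x : ℂ} (h : x = 1 ∨ x = -1) : x * x = 1 := by
  rcases h with rfl | rfl <;> norm_num

lemma pm_conj {x : ℂ} (h : x = 1 ∨ x = -1) : (starRingEnd ℂ) x = x := by
  rcases h with rfl | rfl <;> simp

lemma pm_rel {x1 x2 x3 x4 : ℂ}
    (h1 : x1 = 1 ∨ x1 = -1) (h2 : x2 = 1 ∨ x2 = -1)
    (h3 : x3 = 1 ∨ x3 = -1) (h4 : x4 = 1 ∨ x4 = -1)
    (hsum : x1 * x2 + x3 * x4 = 0) :
    x1 * x3 + x2 * x4 = 0 ∧ x2 * x3 + x1 * x4 = 0 := by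
  rcases h1 with rfl | rfl <;> rcases h2 with rfl | rfl <;> rcases h3 with rfl | rfl <;>
    rcases h4 with rfl | rfl <;> revert hsum <;> norm_num
theorem statement2 (N : ℕ) (a b c d : ℕ → ℂ) (x1 x2 x3 x4 : ℂ)
    (hx1 : x1 = 1 ∨ x1 = -1) (hx2 : x2 = 1 ∨ x2 = -1)
    (hx3 : x3 = 1 ∨ x3 = -1) (hx4 : x4 = 1 ∨ x4 = -1)
    (hsum : x1 * x2 + x3 * x4 = 0)
    (hGCP : ∀ τ, 1 ≤ τ → τ ≤ N - 1 → aCorr a a N τ + aCorr b b N τ = 0)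
    (hc : ∀ k, c k = (starRingEnd ℂ) (b (N - 1 - k)))
    (hd : ∀ k, d k = -(starRingEnd ℂ) (a (N - 1 - k)))
    (p q : ℕ → ℂ)
    (hp : p = quadConcat N x1 x2 x3 x4 a b)
    (hq : q = quadConcat N x1 x2 x3 x4 c d) :
    (∀ τ, 1 ≤ τ → τ ≤ 4 * N - 1 →
      aCorr p p (4 * N) τ + aCorr q q (4 * N) τ = 0) ∧
    (∀ τ, 1 ≤ τ → τ ≤ N →
      pCorr p p (4 * N) τ = 0 ∧ pCorr q q (4 * N) τ = 0) ∧
    (∀ τ, τ ≤ N → pCorr p q (4 * N) τ = 0) := by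
  subst hp; subst hq
  rcases Nat.eq_zero_or_pos N with rfl | hN
  · refine ⟨fun τ h1 h2 => absurd h2 (by omega),
      fun τ h1 h2 => absurd h2 (by omega), fun τ hτ => ?_⟩
    obtain rfl : τ = 0 := by omega
    rw [pCorr]
    norm_num
  have hc' : HC N b c := hc
  have hd' : HD N a d := hd
  have hGCP' : ∀ r, 1 ≤ r → r < N → aCorr a a N r + aCorr b b N r = 0 :=
    fun r h1 h2 => hGCP r h1 (by omega)
  obtain ⟨h13, h14⟩ := pm_rel hx1 hx2 hx3 hx4 hsum
  have hsq1 := pm_mul_self hx1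
  have hsq2 := pm_mul_self hx2
  have hsq3 := pm_mul_self hx3
  have hsq4 := pm_mul_self hx4
  have hcx1 := pm_conj hx1
  have hcx2 := pm_conj hx2
  have hcx3 := pm_conj hx3
  have hcx4 := pm_conj hx4
  refine ⟨?_, ?_, ?_⟩
  · -- (C1)
    intro τ h1 h2
    obtain ⟨m, r, hm4, hrN, hτeq⟩ : ∃ m r, m < 4 ∧ r < N ∧ τ = m * N + r :=
      ⟨τ / N, τ % N, Nat.div_lt_of_lt_mul (by omega), Nat.mod_lt _ hN,
        (Nat.div_add_mod' τ N).symm⟩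
    interval_cases m
    · -- m = 0
      rw [show τ = r from by omega,
        D0 N x1 x2 x3 x4 x1 x2 x3 x4 a b a b r r hrN rfl,
        D0 N x1 x2 x3 x4 x1 x2 x3 x4 c d c d r r hrN rfl]
      simp only [hcx1, hcx2, hcx3, hcx4]
      rw [mate_cc hc' hrN, mate_dd hd' hrN, mate_tcd hc' hd' hrN, mate_tdc hc' hd' hrN]
      linear_combination (x1 * x1 + x2 * x2 + x3 * x3 + x4 * x4) * hGCP' r (by omega) hrN
    · -- m = 1
      rw [show τ = N + r from by omega,
        D1 N x1 x2 x3 x4 x1 x2 x3 x4 a b a b (N + r) r hrN rfl,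
        D1 N x1 x2 x3 x4 x1 x2 x3 x4 c d c d (N + r) r hrN rfl]
      simp only [hcx1, hcx2, hcx3, hcx4]
      rw [mate_cd hc' hd' hrN, mate_dc hc' hd' hrN, mate_tcc hc' hrN, mate_tdd hd' hrN]
      have hT : tCorr a a N r + tCorr b b N r = 0 := by
        rcases Nat.eq_zero_or_pos r with rfl | hr1
        · rw [tCorr_zero, tCorr_zero, add_zero]
        · rw [tCorr_eq_conj a a N r (le_of_lt hrN), tCorr_eq_conj b b N r (le_of_lt hrN),
            ← map_add, hGCP' (N - r) (by omega) (by omega), map_zero]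
      linear_combination (x1 * x3 + x2 * x4) * hT
    · -- m = 2
      rw [show τ = 2 * N + r from by omega,
        D2 N x1 x2 x3 x4 x1 x2 x3 x4 a b a b (2 * N + r) r hrN rfl,
        D2 N x1 x2 x3 x4 x1 x2 x3 x4 c d c d (2 * N + r) r hrN rfl]
      simp only [hcx1, hcx2, hcx3, hcx4]
      rw [mate_cc hc' hrN, mate_dd hd' hrN, mate_tcd hc' hd' hrN]
      have hS : (x1 * x3 + x2 * x4) * (aCorr a a N r + aCorr b b N r) = 0 := by
        rcases Nat.eq_zero_or_pos r with rfl | hr1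
        · rw [h13, zero_mul]
        · rw [hGCP' r hr1 hrN, mul_zero]
      linear_combination hS
    · -- m = 3
      rw [show τ = 3 * N + r from by omega,
        D3 N x1 x2 x3 x4 x1 x2 x3 x4 a b a b (3 * N + r) r hrN rfl,
        D3 N x1 x2 x3 x4 x1 x2 x3 x4 c d c d (3 * N + r) r hrN rfl]
      simp only [hcx1, hcx2, hcx3, hcx4]
      rw [mate_cd hc' hd' hrN]
      ring
  · -- (C2)
    intro τ h1 h2
    rcases Nat.lt_or_ge τ N with hτN | hge
    · constructor
      · rw [pCorr_split _ _ (4 * N) τ (by omega),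
          D0 N x1 x2 x3 x4 x1 x2 x3 x4 a b a b τ τ hτN rfl,
          D3 N x1 x2 x3 x4 x1 x2 x3 x4 a b a b (4 * N - τ) (N - τ) (by omega) (by omega)]
        simp only [map_mul, Complex.conj_conj, hcx1, hcx2, hcx3, hcx4]
        rw [← tCorr_eq_conj b a N τ (le_of_lt hτN)]
        linear_combination (aCorr a a N τ) * hsq1 + (aCorr a a N τ) * hsq3
          + (aCorr b b N τ) * hsq2 + (aCorr b b N τ) * hsq4
          + 2 * hGCP' τ h1 hτN + (tCorr a b N τ) * hsum + (tCorr b a N τ) * h14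
      · rw [pCorr_split _ _ (4 * N) τ (by omega),
          D0 N x1 x2 x3 x4 x1 x2 x3 x4 c d c d τ τ hτN rfl,
          D3 N x1 x2 x3 x4 x1 x2 x3 x4 c d c d (4 * N - τ) (N - τ) (by omega) (by omega),
          mate_cd hc' hd' (show N - τ < N from by omega)]
        simp only [map_mul, map_neg, Complex.conj_conj, hcx1, hcx2, hcx3, hcx4]
        rw [← tCorr_eq_conj b a N τ (le_of_lt hτN),
          mate_cc hc' hτN, mate_dd hd' hτN, mate_tcd hc' hd' hτN, mate_tdc hc' hd' hτN]
        linear_combination (aCorr b b N τ) * hsq1 + (aCorr b b N τ) * hsq3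
          + (aCorr a a N τ) * hsq2 + (aCorr a a N τ) * hsq4
          + 2 * hGCP' τ h1 hτN - (tCorr a b N τ) * hsum - (tCorr b a N τ) * h14
    · obtain rfl : N = τ := by omega
      constructor
      · rw [pCorr_split _ _ (4 * N) N (by omega),
          D1 N x1 x2 x3 x4 x1 x2 x3 x4 a b a b N 0 hN (by omega),
          D3 N x1 x2 x3 x4 x1 x2 x3 x4 a b a b (4 * N - N) 0 hN (by omega),
          tCorr_zero, tCorr_zero]
        simp only [map_mul, Complex.conj_conj, hcx1, hcx2, hcx3, hcx4]
        rw [conj_aCorr_zero]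
        linear_combination (aCorr a b N 0) * hsum + (aCorr b a N 0) * h14
      · rw [pCorr_split _ _ (4 * N) N (by omega),
          D1 N x1 x2 x3 x4 x1 x2 x3 x4 c d c d N 0 hN (by omega),
          D3 N x1 x2 x3 x4 x1 x2 x3 x4 c d c d (4 * N - N) 0 hN (by omega),
          tCorr_zero, tCorr_zero,
          mate_cd hc' hd' hN, mate_dc hc' hd' hN]
        simp only [map_mul, map_neg, Complex.conj_conj, hcx1, hcx2, hcx3, hcx4]
        rw [conj_aCorr_zero]
        linear_combination -(aCorr a b N 0) * hsum - (aCorr b a N 0) * h14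
  · -- (C3)
    intro τ hτle
    rcases Nat.eq_zero_or_pos τ with rfl | hτ1
    · rw [pCorr_split _ _ (4 * N) 0 (by omega)]
      have hz : aCorr (quadConcat N x1 x2 x3 x4 c d) (quadConcat N x1 x2 x3 x4 a b)
          (4 * N) (4 * N - 0) = 0 := by
        rw [aCorr]
        norm_num
      rw [hz, map_zero, add_zero,
        D0 N x1 x2 x3 x4 x1 x2 x3 x4 a b c d 0 0 hN rfl,
        tCorr_zero, tCorr_zero]
      simp only [hcx1, hcx2, hcx3, hcx4]
      have hac := mate_ac_bd hc' hd' hN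
      linear_combination (aCorr a c N 0) * hsq1 + (aCorr a c N 0) * hsq3
        + (aCorr b d N 0) * hsq2 + (aCorr b d N 0) * hsq4 + 2 * hac
    · rcases Nat.lt_or_ge τ N with hτN | hge
      · rw [pCorr_split _ _ (4 * N) τ (by omega),
          D0 N x1 x2 x3 x4 x1 x2 x3 x4 a b c d τ τ hτN rfl,
          D3 N x1 x2 x3 x4 x1 x2 x3 x4 c d a b (4 * N - τ) (N - τ) (by omega) (by omega)]
        simp only [map_mul, Complex.conj_conj, hcx1, hcx2, hcx3, hcx4]
        rw [← tCorr_eq_conj b c N τ (le_of_lt hτN)]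
        have hac := mate_ac_bd hc' hd' hτN
        linear_combination (aCorr a c N τ) * hsq1 + (aCorr a c N τ) * hsq3
          + (aCorr b d N τ) * hsq2 + (aCorr b d N τ) * hsq4 + 2 * hac
          + (tCorr a d N τ) * hsum + (tCorr b c N τ) * h14
      · obtain rfl : N = τ := by omega
        rw [pCorr_split _ _ (4 * N) N (by omega),
          D1 N x1 x2 x3 x4 x1 x2 x3 x4 a b c d N 0 hN (by omega),
          D3 N x1 x2 x3 x4 x1 x2 x3 x4 c d a b (4 * N - N) 0 hN (by omega),
          tCorr_zero, tCorr_zero]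
        simp only [map_mul, Complex.conj_conj, hcx1, hcx2, hcx3, hcx4]
        rw [conj_aCorr_zero]
        linear_combination (aCorr a d N 0) * hsum + (aCorr b c N 0) * h14
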